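/- For all non-negative integers n, j, m with j ≤ n and integers l, the identity sum over r ≥ 0 of (-1)^r · binomial(n-r, r) · binomial(n-2r, j) · binomial(n-j-2r, l-r) equals binomial(n-l, j) · binomial(l+j, j) holds, where binomial coefficients with negative or out-of-range arguments are 0. -/

import Mathlib

/- Integer binomial coefficient: `chz a b = binomial(a,b)`, equal to `0` unless
`0 ≤ b ≤ a`. -/
def chz (a b : ℤ) : ℤ := if 0 ≤ b ∧ b ≤ a then (a.toNat.choose b.toNat : ℤ) else 0

lemma chz_zero {a b : ℤ} (h : ¬ (0 ≤ b ∧ b ≤ a)) : chz a b = 0 := if_neg h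

lemma chz_pascal (a b : ℤ) (h : 0 ≤ a ∨ 0 < b) :
    chz (a + 1) b = chz a b + chz a (b - 1) := by
  unfold chz
  split_ifs with h1 h2 h3 h2 h3 <;> try omega
  · -- main case: 0 ≤ b-1, so b ≥ 1, and 0 ≤ a
    have ha : 0 ≤ a := by omega
    have : (a+1).toNat = a.toNat + 1 := by omega
    have hb : b.toNat = (b-1).toNat + 1 := by omega
    rw [this, hb, Nat.choose_succ_succ]
    push_cast
    ring
  · -- 0 ≤ b ∧ b ≤ a+1, 0 ≤ b ∧ b ≤ a, ¬(0 ≤ b-1 ∧ b-1 ≤ a): b = 0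
    have : b = 0 := by omega
    subst this
    simp
  · -- b = a + 1 case: LHS = 1, RHS second = choose a.toNat a.toNat
    have hb : b = a + 1 := by omega
    subst hb
    have h1 : (a+1).toNat = a.toNat + 1 := by omega
    have h2 : (a+1-1).toNat = a.toNat := by omega
    rw [h1, h2, Nat.choose_self, Nat.choose_self]
    simp

lemma chz_trinomial (a b c : ℤ) :
    chz a b * chz (a - b) c = chz a (b + c) * chz (b + c) b := by
  unfold chz
  split_ifs with h1 h2 h3 h4 h3 h4 h3 h4 <;> try omega
  · -- main case
    have e1 : (a - b).toNat = a.toNat - b.toNat := by omega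
    have e2 : (b + c).toNat = b.toNat + c.toNat := by omega
    rw [e1, e2]
    have := Nat.choose_mul (n := a.toNat) (k := b.toNat + c.toNat) (s := b.toNat)
      (by omega)
    rw [Nat.add_sub_cancel_left] at this
    rw [← Nat.cast_mul, ← Nat.cast_mul, ← this]

lemma chz_symm_add (r j : ℕ) : chz ((r : ℤ) + j) r = chz ((r : ℤ) + j) j := by
  unfold chz
  have h : ((r : ℤ) + j).toNat = r + j := by omega
  rw [if_pos ⟨by positivity, by omega⟩, if_pos ⟨by positivity, by omega⟩, h]
  simp only [Int.toNat_natCast]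
  exact_mod_cast Nat.choose_symm_add

lemma chz_swap (m : ℤ) (r j : ℕ) :
    chz m r * chz (m - r) j = chz m j * chz (m - j) r := by
  have t1 := chz_trinomial m r j
  have t2 := chz_trinomial m j r
  rw [chz_symm_add r j] at t1
  rw [t1, t2, add_comm (j : ℤ) r]

lemma chz_key (m : ℤ) (L : ℕ) (hL : (L : ℤ) ≤ m) : ∀ n : ℕ,
    ∑ r ∈ Finset.range (n + 1), (-1 : ℤ) ^ r * chz (L : ℤ) r * chz ((n : ℤ) - r) m
      = chz ((n : ℤ) - L) (m - L) := by
  induction L with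
  | zero =>
    intro n
    rw [Finset.sum_eq_single 0]
    · simp [chz]
    · intro r _ hr
      have : chz (((0:ℕ) : ℤ)) (r : ℤ) = 0 := chz_zero (by push_cast; omega)
      rw [this]; ring
    · intro h; simp at h
  | succ L ih =>
    intro n
    have hm : (L : ℤ) + 1 ≤ m := by push_cast at hL; omega
    have hL' : (L : ℤ) ≤ m := by omega
    have step : ∀ r : ℕ, chz ((L + 1 : ℕ) : ℤ) r = chz (L : ℤ) r + chz (L : ℤ) ((r : ℤ) - 1) := by
      intro r
      have h := chz_pascal (L : ℤ) r (Or.inl (by positivity))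
      push_cast
      exact h
    have split : ∑ r ∈ Finset.range (n + 1), (-1 : ℤ) ^ r * chz ((L + 1 : ℕ) : ℤ) r * chz ((n : ℤ) - r) m
        = (∑ r ∈ Finset.range (n + 1), (-1 : ℤ) ^ r * chz (L : ℤ) r * chz ((n : ℤ) - r) m)
          + ∑ r ∈ Finset.range (n + 1), (-1 : ℤ) ^ r * chz (L : ℤ) ((r : ℤ) - 1) * chz ((n : ℤ) - r) m := by
      rw [← Finset.sum_add_distrib]
      apply Finset.sum_congr rfl
      intro r _
      rw [step r]; ring
    have second : ∑ r ∈ Finset.range (n + 1), (-1 : ℤ) ^ r * chz (L : ℤ) ((r : ℤ) - 1) * chz ((n : ℤ) - r) m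
        = - chz ((n : ℤ) - 1 - L) (m - L) := by
      cases n with
      | zero =>
        have e0 : chz (L : ℤ) ((0 : ℤ) - 1) = 0 := chz_zero (by omega)
        have e1 : chz ((0 : ℤ) - 1 - L) (m - L) = 0 := chz_zero (by omega)
        rw [Finset.sum_range_one]
        simp only [Nat.cast_zero]
        rw [e0, e1]
        ring
      | succ n' =>
        rw [Finset.sum_range_succ']
        have e0 : chz (L : ℤ) ((0 : ℤ) - 1) = 0 := chz_zero (by omega)
        have congr1 : ∑ i ∈ Finset.range (n' + 1),
              (-1 : ℤ) ^ (i + 1) * chz (L : ℤ) (((i + 1 : ℕ) : ℤ) - 1) * chz (((n' + 1 : ℕ) : ℤ) - ((i + 1 : ℕ) : ℤ)) m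
            = - ∑ i ∈ Finset.range (n' + 1), (-1 : ℤ) ^ i * chz (L : ℤ) i * chz ((n' : ℤ) - i) m := by
          rw [← Finset.sum_neg_distrib]
          apply Finset.sum_congr rfl
          intro i _
          have c1 : ((i + 1 : ℕ) : ℤ) - 1 = (i : ℤ) := by push_cast; ring
          have c2 : ((n' + 1 : ℕ) : ℤ) - ((i + 1 : ℕ) : ℤ) = (n' : ℤ) - i := by push_cast; ring
          rw [c1, c2, pow_succ]
          ring
        rw [congr1, ih hL' n']
        have c3 : ((n' + 1 : ℕ) : ℤ) - 1 - L = (n' : ℤ) - L := by push_cast; ring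
        rw [c3]
        simp only [Nat.cast_zero]
        rw [e0]
        ring
    rw [split, ih hL' n, second]
    have pas := chz_pascal ((n : ℤ) - L - 1) (m - L) (Or.inr (by omega))
    have c4 : (n : ℤ) - L - 1 + 1 = (n : ℤ) - L := by ring
    rw [c4] at pas
    have c5 : ((n : ℤ)) - ((L + 1 : ℕ) : ℤ) = (n : ℤ) - L - 1 := by push_cast; ring
    have c6 : m - ((L + 1 : ℕ) : ℤ) = m - L - 1 := by push_cast; ring
    have c7 : (n : ℤ) - 1 - L = (n : ℤ) - L - 1 := by ring
    rw [c5, c6, c7, pas]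
    ring

theorem alternating_sum_binomial_identity (n j : ℕ) (hj : j ≤ n) (l : ℤ) :
    ∑ r ∈ Finset.range (n + 1),
      (-1 : ℤ) ^ r * chz ((n : ℤ) - r) r * chz ((n : ℤ) - 2 * r) j *
        chz ((n : ℤ) - j - 2 * r) (l - r) =
      chz ((n : ℤ) - l) j * chz (l + j) j := by
  rcases lt_or_ge l 0 with hl | hl
  · have rhs0 : chz (l + j) j = 0 := chz_zero (by omega)
    rw [rhs0, mul_zero]
    apply Finset.sum_eq_zero
    intro r _
    have h0 : chz ((n : ℤ) - j - 2 * r) (l - r) = 0 := chz_zero (by omega)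
    rw [h0]; ring
  · obtain ⟨L, rfl⟩ : ∃ L : ℕ, l = (L : ℤ) := ⟨l.toNat, (Int.toNat_of_nonneg hl).symm⟩
    have term : ∀ r ∈ Finset.range (n + 1),
        (-1 : ℤ) ^ r * chz ((n : ℤ) - r) r * chz ((n : ℤ) - 2 * r) j *
            chz ((n : ℤ) - j - 2 * r) ((L : ℤ) - r)
          = chz ((L : ℤ) + j) j *
              ((-1 : ℤ) ^ r * chz ((L : ℤ)) r * chz ((n : ℤ) - r) ((L : ℤ) + j)) := by
      intro r _
      have t1 := chz_trinomial ((n : ℤ) - 2 * r) j ((L : ℤ) - r)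
      rw [show (n : ℤ) - 2 * r - j = (n : ℤ) - j - 2 * r from by ring,
        show (j : ℤ) + ((L : ℤ) - r) = (L : ℤ) + j - r from by ring] at t1
      have t2 := chz_trinomial ((n : ℤ) - r) r ((L : ℤ) + j - r)
      rw [show (n : ℤ) - r - r = (n : ℤ) - 2 * r from by ring,
        show (r : ℤ) + ((L : ℤ) + j - r) = (L : ℤ) + j from by ring] at t2
      have t3 := chz_swap ((L : ℤ) + j) r j
      rw [show (L : ℤ) + j - j = (L : ℤ) from by ring] at t3
      linear_combination ((-1 : ℤ) ^ r * chz ((n : ℤ) - r) r) * t1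
        + ((-1 : ℤ) ^ r * chz ((L : ℤ) + j - r) j) * t2
        + ((-1 : ℤ) ^ r * chz ((n : ℤ) - r) ((L : ℤ) + j)) * t3
    rw [Finset.sum_congr rfl term, ← Finset.mul_sum,
      chz_key ((L : ℤ) + j) L (by omega) n,
      show (L : ℤ) + j - L = (j : ℤ) from by ring]
    ring
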